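/- Let q be a prime power, 1 ≤ s ≤ k < n, and suppose C_s is an [n,s]_q linear code with minimum distance ≥ d. If ∑_{i=0}^{d-1} C(n,i)(q-1)^i < q^{n-k+1}, then there exists an [n,k]_q linear code C_k with minimum distance ≥ d containing C_s as a subcode. -/

import Mathlib

open Finset

section Helpers

variable {F : Type} [Field F] [Fintype F] [DecidableEq F] {n : ℕ}

private lemma card_supp_eq (s : Finset (Fin n)) :
    (univ.filter fun y : Fin n → F => univ.filter (fun j => y j ≠ 0) = s).card
      = (Fintype.card F - 1) ^ s.card := by
  have hcard : ((univ : Finset (↥s → {a : F // a ≠ 0}))).card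
      = (Fintype.card F - 1) ^ s.card := by
    rw [card_univ, Fintype.card_fun, Fintype.card_coe]
    congr 1
    have := Fintype.card_subtype_compl (p := fun a : F => a = 0)
    simpa [Fintype.card_subtype_eq] using this
  rw [← hcard]
  refine Finset.card_bij' (fun y hy => fun j => ⟨y j.1, ?_⟩)
    (fun f _ => fun j => if h : j ∈ s then (f ⟨j, h⟩).1 else 0) (fun _ _ => mem_univ _)
    ?_ ?_ ?_
  · simp only [mem_filter, mem_univ, true_and] at hy
    obtain ⟨jv, hjs⟩ := j
    rw [← hy, mem_filter] at hjs
    exact hjs.2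
  · intro f _
    simp only [mem_filter, mem_univ, true_and]
    ext j
    simp only [mem_filter, mem_univ, true_and]
    by_cases h : j ∈ s
    · simp only [dif_pos h]
      exact iff_of_true (f ⟨j, h⟩).2 h
    · simp only [dif_neg h]
      exact iff_of_false (by simp) h
  · intro y hy
    simp only [mem_filter, mem_univ, true_and] at hy
    funext j
    by_cases h : j ∈ s
    · simp only [dif_pos h]
    · simp only [dif_neg h]
      by_contra hne
      exact h (by rw [← hy, mem_filter]; exact ⟨mem_univ _, fun hz => hne hz.symm⟩)
  · intro f _
    funext j
    ext
    simp only [dif_pos j.2]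

private lemma card_norm_eq (i : ℕ) :
    (univ.filter fun y : Fin n → F => hammingNorm y = i).card
      = n.choose i * (Fintype.card F - 1) ^ i := by
  have hset : (univ.filter fun y : Fin n → F => hammingNorm y = i)
      = (Finset.powersetCard i (univ : Finset (Fin n))).biUnion
          (fun s => univ.filter fun y : Fin n → F => univ.filter (fun j => y j ≠ 0) = s) := by
    ext y
    simp only [mem_filter, mem_univ, true_and, mem_biUnion, mem_powersetCard]
    constructor
    · intro h
      exact ⟨univ.filter (fun j => y j ≠ 0), ⟨subset_univ _, h⟩, rfl⟩
    · rintro ⟨s, ⟨-, hcard⟩, hy⟩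
      rw [hammingNorm, hy, hcard]
  rw [hset, Finset.card_biUnion]
  · rw [Finset.sum_congr rfl (fun s hs => ?_)]
    · rw [Finset.sum_const, smul_eq_mul]
      congr 1
      rw [Finset.card_powersetCard, card_univ, Fintype.card_fin]
    · rw [card_supp_eq, (mem_powersetCard.mp hs).2]
  · intro s _ t _ hst
    refine Finset.disjoint_left.mpr fun y hy hy' => hst ?_
    rw [mem_filter] at hy hy'
    rw [← hy.2, ← hy'.2]

private lemma card_ball_le (c : Fin n → F) (d : ℕ) :
    (univ.filter fun x : Fin n → F => hammingDist x c < d).card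
      = ∑ i ∈ Finset.range d, n.choose i * (Fintype.card F - 1) ^ i := by
  have hshift : (univ.filter fun x : Fin n → F => hammingDist x c < d).card
      = (univ.filter fun y : Fin n → F => hammingNorm y < d).card := by
    refine Finset.card_bij' (fun x _ => x - c) (fun y _ => y + c) ?_ ?_ ?_ ?_
    · intro x hx
      simp only [mem_filter, mem_univ, true_and] at hx ⊢
      rwa [hammingDist_comm, hammingDist_eq_hammingNorm, neg_add_eq_sub] at hx
    · intro y hy
      simp only [mem_filter, mem_univ, true_and] at hy ⊢
      rwa [hammingDist_comm, hammingDist_eq_hammingNorm, neg_add_eq_sub, add_sub_cancel_right]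
    · intro x _; simp
    · intro y _; simp
  rw [hshift]
  have hpart : (univ.filter fun y : Fin n → F => hammingNorm y < d)
      = (Finset.range d).biUnion
          (fun i => univ.filter fun y : Fin n → F => hammingNorm y = i) := by
    ext y
    simp only [mem_filter, mem_univ, true_and, mem_biUnion, Finset.mem_range]
    constructor
    · intro h; exact ⟨hammingNorm y, h, rfl⟩
    · rintro ⟨i, hi, rfl⟩; exact hi
  rw [hpart, Finset.card_biUnion]
  · exact Finset.sum_congr rfl fun i _ => card_norm_eq i
  · intro i _ j _ hij
    refine Finset.disjoint_left.mpr fun y hy hy' => hij ?_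
    rw [mem_filter] at hy hy'
    rw [← hy.2, ← hy'.2]

/-- One extension step: a code of dimension `t < k` with minimum distance `≥ d`
extends to one of dimension `t + 1`. -/
private lemma extension_step (q n k d : ℕ) (hq : Fintype.card F = q) (hkn : k < n)
    (C : Submodule F (Fin n → F)) (ht : Module.finrank F C < k)
    (hCd : ∀ c ∈ C, c ≠ 0 → d ≤ hammingNorm c)
    (hGV : ∑ i ∈ Finset.range d, n.choose i * (q - 1) ^ i < q ^ (n - k + 1)) :
    ∃ C' : Submodule F (Fin n → F), Module.finrank F C' = Module.finrank F C + 1 ∧ C ≤ C' ∧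
      ∀ c ∈ C', c ≠ 0 → d ≤ hammingNorm c := by
  classical
  have hq2 : 2 ≤ q := hq ▸ Fintype.one_lt_card
  have hq0 : 0 < q := by omega
  set t := Module.finrank F C with htdef
  -- the set of "bad" vectors
  set CF : Finset (Fin n → F) := (C : Set (Fin n → F)).toFinset with hCF
  set S : Finset (Fin n → F) :=
    CF.biUnion (fun c => univ.filter fun x => hammingDist x c < d ∨ x = c) with hS
  have hCFcard : CF.card = q ^ t := by
    rw [hCF, Set.toFinset_card, ← hq]
    exact Module.card_eq_pow_finrank
  -- each local ball has size < q ^ (n - k + 1)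
  have hball : ∀ c : Fin n → F,
      (univ.filter fun x : Fin n → F => hammingDist x c < d ∨ x = c).card
        ≤ q ^ (n - k + 1) - 1 := by
    intro c
    rcases Nat.eq_zero_or_pos d with hd | hd
    · subst hd
      have : (univ.filter fun x : Fin n → F => hammingDist x c < 0 ∨ x = c)
          = {c} := by
        ext x; simp
      rw [this, Finset.card_singleton]
      have : 2 ≤ q ^ (n - k + 1) :=
        le_trans hq2 (Nat.le_self_pow (by omega) q)
      omega
    · have heq : (univ.filter fun x : Fin n → F => hammingDist x c < d ∨ x = c)
          = univ.filter fun x : Fin n → F => hammingDist x c < d := by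
        ext x
        simp only [mem_filter, mem_univ, true_and]
        constructor
        · rintro (h | rfl)
          · exact h
          · simpa using hd
        · exact Or.inl
      rw [heq, card_ball_le, hq]
      omega
  have hScard : S.card < q ^ n := by
    calc S.card ≤ ∑ c ∈ CF, (univ.filter fun x : Fin n → F =>
          hammingDist x c < d ∨ x = c).card := Finset.card_biUnion_le
    _ ≤ ∑ _c ∈ CF, (q ^ (n - k + 1) - 1) := Finset.sum_le_sum fun c _ => hball c
    _ = q ^ t * (q ^ (n - k + 1) - 1) := by rw [Finset.sum_const, smul_eq_mul, hCFcard]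
    _ < q ^ t * q ^ (n - k + 1) := by
        have h1 : 0 < q ^ t := Nat.pow_pos hq0
        have h2 : 0 < q ^ (n - k + 1) := Nat.pow_pos hq0
        exact mul_lt_mul_of_pos_left (by omega) h1
    _ = q ^ (t + (n - k + 1)) := by rw [← pow_add]
    _ ≤ q ^ n := Nat.pow_le_pow_right hq0 (by omega)
  -- find a vector outside S
  have hexists : ∃ x : Fin n → F, x ∉ S := by
    by_contra h
    push_neg at h
    have : (univ : Finset (Fin n → F)) ⊆ S := fun x _ => h x
    have hle := Finset.card_le_card this
    rw [Finset.card_univ, Fintype.card_fun, hq, Fintype.card_fin] at hle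
    omega
  obtain ⟨x, hx⟩ := hexists
  have hxprop : ∀ c ∈ C, d ≤ hammingDist x c ∧ x ≠ c := by
    intro c hc
    have hcCF : c ∈ CF := by rw [hCF, Set.mem_toFinset]; exact hc
    have : x ∉ univ.filter fun y : Fin n → F => hammingDist y c < d ∨ y = c := by
      intro hmem
      exact hx (Finset.mem_biUnion.mpr ⟨c, hcCF, hmem⟩)
    simp only [mem_filter, mem_univ, true_and, not_or] at this
    exact ⟨by omega, this.2⟩
  have hxC : x ∉ C := fun h => (hxprop x h).2 rfl
  have hx0 : x ≠ 0 := fun h => hxC (h ▸ C.zero_mem)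
  refine ⟨C ⊔ Submodule.span F {x}, ?_, le_sup_left, ?_⟩
  · have hinf : C ⊓ Submodule.span F {x} = ⊥ := by
      rw [eq_bot_iff]
      rintro y ⟨hyC, hyx⟩
      obtain ⟨a, rfl⟩ := Submodule.mem_span_singleton.mp hyx
      rcases eq_or_ne a 0 with rfl | ha
      · simp
      · exfalso
        apply hxC
        have : a⁻¹ • (a • x) ∈ C := C.smul_mem _ hyC
        rwa [smul_smul, inv_mul_cancel₀ ha, one_smul] at this
    have := Submodule.finrank_sup_add_finrank_inf_eq C (Submodule.span F {x})
    rw [hinf, finrank_bot, finrank_span_singleton hx0] at this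
    omega
  · intro y hy hy0
    obtain ⟨c, hc, z, hz, rfl⟩ := Submodule.mem_sup.mp hy
    obtain ⟨a, rfl⟩ := Submodule.mem_span_singleton.mp hz
    rcases eq_or_ne a 0 with rfl | ha
    · rw [zero_smul, add_zero] at hy0 ⊢
      exact hCd c hc hy0
    · have hreg : ∀ i : Fin n, IsSMulRegular F a := fun _ => mul_right_injective₀ ha
      have hrw : c + a • x = a • (x - (-(a⁻¹ • c))) := by
        rw [sub_neg_eq_add, smul_add, smul_smul, mul_inv_cancel₀ ha, one_smul]
        abel
      rw [hrw, hammingNorm_smul hreg, ← neg_add_eq_sub, ← hammingDist_eq_hammingNorm, hammingDist_comm]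
      exact (hxprop _ (C.neg_mem (C.smul_mem _ hc))).1

end Helpers

/-- Refined Gilbert bound: an `[n,s]_q` code of minimum distance at least `d` extends to
an `[n,k]_q` code of minimum distance at least `d` provided
`∑_{i=0}^{d-1} C(n,i)(q-1)^i < q^{n-k+1}`. -/
theorem gilbert_extension (F : Type) [Field F] [Fintype F] [DecidableEq F]
    (q n k s d : ℕ) (hq : Fintype.card F = q)
    (hs : 1 ≤ s) (hsk : s ≤ k) (hkn : k < n)
    (Cs : Submodule F (Fin n → F)) (hdimCs : Module.finrank F Cs = s)
    (hCsd : ∀ c ∈ Cs, c ≠ 0 → d ≤ hammingNorm c)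
    (hGV : ∑ i ∈ Finset.range d, n.choose i * (q - 1) ^ i < q ^ (n - k + 1)) :
    ∃ Ck : Submodule F (Fin n → F), Module.finrank F Ck = k ∧ Cs ≤ Ck ∧
      ∀ c ∈ Ck, c ≠ 0 → d ≤ hammingNorm c := by
  have main : ∀ m : ℕ, ∀ C : Submodule F (Fin n → F), Module.finrank F C + m = k →
      (∀ c ∈ C, c ≠ 0 → d ≤ hammingNorm c) →
      ∃ Ck : Submodule F (Fin n → F), Module.finrank F Ck = k ∧ C ≤ Ck ∧
        ∀ c ∈ Ck, c ≠ 0 → d ≤ hammingNorm c := by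
    intro m
    induction m with
    | zero => exact fun C hC hCd => ⟨C, by omega, le_refl _, hCd⟩
    | succ m ih =>
      intro C hC hCd
      obtain ⟨C', hC', hle, hC'd⟩ :=
        extension_step q n k d hq hkn C (by omega) hCd hGV
      obtain ⟨Ck, h1, h2, h3⟩ := ih C' (by omega) hC'd
      exact ⟨Ck, h1, le_trans hle h2, h3⟩
  exact main (k - s) Cs (by omega) hCsd
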